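/- Let N ∈ ℝ^{n×m} and for an index set 𝔧 ⊆ [m] let P_𝔧 be the coordinate projection onto coordinates in 𝔧. Then for 𝔧' ⊆ 𝔧 ⊆ [m], the ellipsoid E_{𝔧'} := √(N P_{𝔧'} Nᵀ)(B₂ⁿ) is contained in E_𝔧 := √(N P_𝔧 Nᵀ)(B₂ⁿ). -/

import Mathlib

open Matrix Finset

namespace Matrix.PosSemidef

open scoped ComplexOrder

/-- The positive semidefinite square root, as defined in Mathlib (Dec 2024), since removed. -/
noncomputable def sqrt {n 𝕜 : Type*} [Fintype n] [RCLike 𝕜] [DecidableEq n] {A : Matrix n n 𝕜}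
    (hA : PosSemidef A) : Matrix n n 𝕜 :=
  hA.1.eigenvectorUnitary.1 * diagonal ((↑) ∘ (√·) ∘ hA.1.eigenvalues) *
    (star hA.1.eigenvectorUnitary : Matrix n n 𝕜)

lemma posSemidef_sqrt {n 𝕜 : Type*} [Fintype n] [RCLike 𝕜] [DecidableEq n] {A : Matrix n n 𝕜}
    (hA : PosSemidef A) : PosSemidef hA.sqrt := by
  have h := (posSemidef_diagonal_iff (d := ((↑) ∘ (√·) ∘ hA.1.eigenvalues : n → 𝕜))).mpr
    fun i => by
      rw [Function.comp_apply, RCLike.nonneg_iff]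
      constructor
      · simp only [RCLike.ofReal_re]
        exact Real.sqrt_nonneg _
      · simp only [RCLike.ofReal_im]
  have := h.mul_mul_conjTranspose_same (hA.1.eigenvectorUnitary : Matrix n n 𝕜)
  simpa [sqrt, star_eq_conjTranspose] using this

lemma sqrt_mul_self {n 𝕜 : Type*} [Fintype n] [RCLike 𝕜] [DecidableEq n] {A : Matrix n n 𝕜}
    (hA : PosSemidef A) : hA.sqrt * hA.sqrt = A := by
  let C : Matrix n n 𝕜 := hA.1.eigenvectorUnitary
  let E := diagonal ((↑) ∘ (√·) ∘ hA.1.eigenvalues : n → 𝕜)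
  suffices C * (E * (star C * C) * E) * star C = A by
    rw [Matrix.PosSemidef.sqrt]
    simpa only [← mul_assoc] using this
  have : E * E = diagonal ((↑) ∘ hA.1.eigenvalues) := by
    rw [diagonal_mul_diagonal]
    congr! with v
    simp [← pow_two, ← RCLike.ofReal_pow, Real.sq_sqrt (hA.eigenvalues_nonneg v)]
  have hC : star C * C = 1 := Unitary.star_mul_self_of_mem hA.1.eigenvectorUnitary.2
  rw [hC, mul_one, this]
  exact (hA.1.spectral_theorem).symm

end Matrix.PosSemidef

private lemma quadform_eq {n m : ℕ} (N : Matrix (Fin n) (Fin m) ℝ) (J : Finset (Fin m))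
    (w : Fin n → ℝ) :
    w ⬝ᵥ (N * Matrix.diagonal (fun j => if j ∈ J then (1 : ℝ) else 0) * Nᵀ) *ᵥ w
      = ∑ j ∈ J, (Nᵀ *ᵥ w) j ^ 2 := by
  rw [← Matrix.mulVec_mulVec, ← Matrix.mulVec_mulVec, Matrix.dotProduct_mulVec,
    ← Matrix.mulVec_transpose]
  simp only [Matrix.mulVec_diagonal, dotProduct, ite_mul, one_mul, zero_mul, mul_ite, mul_zero]
  rw [Finset.sum_ite_mem, Finset.univ_inter]
  exact Finset.sum_congr rfl fun j _ => (sq _).symm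

private lemma normsq_sqrt {n : ℕ} {A : Matrix (Fin n) (Fin n) ℝ} (hA : A.PosSemidef)
    (w : Fin n → ℝ) : ∑ i, (hA.sqrt *ᵥ w) i ^ 2 = w ⬝ᵥ A *ᵥ w := by
  have hsym : hA.sqrt ᵀ = hA.sqrt := by
    rw [← Matrix.conjTranspose_eq_transpose_of_trivial]
    exact hA.posSemidef_sqrt.isHermitian
  have : ∑ i, (hA.sqrt *ᵥ w) i ^ 2 = (hA.sqrt *ᵥ w) ⬝ᵥ (hA.sqrt *ᵥ w) := by
    simp [dotProduct, sq]
  rw [this, Matrix.dotProduct_mulVec, ← Matrix.mulVec_transpose, hsym,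
    Matrix.mulVec_mulVec, hA.sqrt_mul_self]
  exact dotProduct_comm _ _

private lemma ball_compact (n : ℕ) : IsCompact {y : Fin n → ℝ | ∑ i, y i ^ 2 ≤ 1} := by
  have hclosed : IsClosed {y : Fin n → ℝ | ∑ i, y i ^ 2 ≤ 1} :=
    isClosed_le (continuous_finset_sum _ fun i _ => (continuous_apply i).pow 2) continuous_const
  refine Metric.isCompact_of_isClosed_isBounded hclosed ?_
  refine (Metric.isBounded_closedBall (x := (0 : Fin n → ℝ)) (r := 1)).subset ?_
  intro y hy
  simp only [Metric.mem_closedBall, dist_zero_right]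
  refine pi_norm_le_iff_of_nonneg zero_le_one |>.mpr fun i => ?_
  have h1 : y i ^ 2 ≤ 1 :=
    le_trans (Finset.single_le_sum (fun j _ => sq_nonneg (y j)) (mem_univ i)) hy
  rw [Real.norm_eq_abs]
  exact (sq_le_one_iff_abs_le_one (y i)).mp h1

private lemma sqrt_image_mono {n : ℕ} {A B : Matrix (Fin n) (Fin n) ℝ}
    (hA : A.PosSemidef) (hB : B.PosSemidef)
    (hAB : ∀ w, w ⬝ᵥ A *ᵥ w ≤ w ⬝ᵥ B *ᵥ w) :
    hA.sqrt.mulVec '' {y : Fin n → ℝ | ∑ i, (y i) ^ 2 ≤ 1}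
      ⊆ hB.sqrt.mulVec '' {y : Fin n → ℝ | ∑ i, (y i) ^ 2 ≤ 1} := by
  rintro _ ⟨y, hy, rfl⟩
  simp only [Set.mem_setOf_eq] at hy
  set S := hB.sqrt with hSdef
  set v := hA.sqrt *ᵥ y with hv
  have hAsym : hA.sqrtᵀ = hA.sqrt := by
    rw [← Matrix.conjTranspose_eq_transpose_of_trivial]
    exact hA.posSemidef_sqrt.isHermitian
  have hSsym : Sᵀ = S := by
    rw [← Matrix.conjTranspose_eq_transpose_of_trivial]
    exact hB.posSemidef_sqrt.isHermitian
  have hK : IsCompact (S.mulVec '' {y : Fin n → ℝ | ∑ i, y i ^ 2 ≤ 1}) :=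
    (ball_compact n).image (continuous_const.matrix_mulVec continuous_id)
  have key : ∀ k : ℕ, ∃ x : Fin n → ℝ, (∑ i, x i ^ 2 ≤ 1) ∧
      ‖v - S *ᵥ x‖ ≤ Real.sqrt (1 / (k + 1)) := by
    intro k
    set ε : ℝ := 1 / (k + 1) with hε
    have hεpos : 0 < ε := by positivity
    set M := B + Matrix.diagonal (fun _ : Fin n => ε) with hM
    have hMpd : M.PosDef :=
      Matrix.PosDef.posSemidef_add hB (Matrix.posDef_diagonal_iff.mpr fun _ => hεpos)
    have hdet : IsUnit M.det := isUnit_iff_ne_zero.mpr hMpd.det_pos.ne'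
    set w := M⁻¹ *ᵥ v with hw
    have hMw : M *ᵥ w = v := by
      rw [hw, Matrix.mulVec_mulVec, Matrix.mul_nonsing_inv _ hdet, Matrix.one_mulVec]
    set x := S *ᵥ w with hx
    have ha : ∑ i, x i ^ 2 = w ⬝ᵥ B *ᵥ w := normsq_sqrt hB w
    have hb : w ⬝ᵥ v = w ⬝ᵥ B *ᵥ w + ε * (∑ i, w i ^ 2) := by
      rw [← hMw, hM, Matrix.add_mulVec, dotProduct_add]
      congr 1
      simp only [dotProduct, Matrix.mulVec_diagonal, Finset.mul_sum]
      exact Finset.sum_congr rfl fun i _ => by ring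
    have hwnn : (0:ℝ) ≤ ∑ i, w i ^ 2 := Finset.sum_nonneg fun i _ => sq_nonneg _
    have hBnn : (0:ℝ) ≤ w ⬝ᵥ B *ᵥ w := by
      rw [← ha]; exact Finset.sum_nonneg fun i _ => sq_nonneg _
    have hynn : (0:ℝ) ≤ ∑ i, y i ^ 2 := Finset.sum_nonneg fun i _ => sq_nonneg _
    have h1 : w ⬝ᵥ v = ∑ i, (hA.sqrt *ᵥ w) i * y i := by
      rw [hv, Matrix.dotProduct_mulVec, ← Matrix.mulVec_transpose, hAsym]
      rfl
    have hcs : (w ⬝ᵥ v) ^ 2 ≤ w ⬝ᵥ B *ᵥ w := by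
      calc (w ⬝ᵥ v) ^ 2 = (∑ i, (hA.sqrt *ᵥ w) i * y i) ^ 2 := by rw [h1]
        _ ≤ (∑ i, (hA.sqrt *ᵥ w) i ^ 2) * (∑ i, y i ^ 2) :=
            Finset.sum_mul_sq_le_sq_mul_sq _ _ _
        _ = (w ⬝ᵥ A *ᵥ w) * (∑ i, y i ^ 2) := by rw [normsq_sqrt hA w]
        _ ≤ (w ⬝ᵥ B *ᵥ w) * 1 := by
            apply mul_le_mul (hAB w) hy hynn hBnn
        _ = w ⬝ᵥ B *ᵥ w := mul_one _
    have hεw : 0 ≤ ε * (∑ i, w i ^ 2) := mul_nonneg hεpos.le hwnn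
    have hb1 : w ⬝ᵥ v ≤ 1 := by nlinarith
    refine ⟨x, by nlinarith, ?_⟩
    have hres : v - S *ᵥ x = ε • w := by
      rw [hx, Matrix.mulVec_mulVec, hSdef, hB.sqrt_mul_self, ← hMw, hM, Matrix.add_mulVec]
      funext i
      simp [Matrix.mulVec_diagonal]
    rw [hres]
    have hwsum : ε * (∑ i, w i ^ 2) ≤ 1 := by nlinarith
    have hnw : ‖w‖ ≤ Real.sqrt (∑ i, w i ^ 2) := by
      refine pi_norm_le_iff_of_nonneg (Real.sqrt_nonneg _) |>.mpr fun i => ?_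
      rw [Real.norm_eq_abs, ← Real.sqrt_sq_eq_abs]
      exact Real.sqrt_le_sqrt
        (Finset.single_le_sum (fun j _ => sq_nonneg (w j)) (mem_univ i))
    calc ‖ε • w‖ = ε * ‖w‖ := by
          rw [norm_smul, Real.norm_eq_abs, abs_of_pos hεpos]
      _ ≤ ε * Real.sqrt (∑ i, w i ^ 2) := by
          exact mul_le_mul_of_nonneg_left hnw hεpos.le
      _ = Real.sqrt (ε ^ 2 * (∑ i, w i ^ 2)) := by
          rw [Real.sqrt_mul (sq_nonneg _), Real.sqrt_sq hεpos.le]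
      _ ≤ Real.sqrt ε := by
          apply Real.sqrt_le_sqrt; nlinarith
      _ = Real.sqrt (1 / (k + 1)) := by rw [hε]
  choose xs hxs1 hxs2 using key
  have h0 : Filter.Tendsto (fun k : ℕ => Real.sqrt (1 / (k + 1))) Filter.atTop (nhds 0) := by
    have := (Real.continuous_sqrt.tendsto 0).comp tendsto_one_div_add_atTop_nhds_zero_nat
    simpa [Function.comp_def, Real.sqrt_inv] using this
  have hT : Filter.Tendsto (fun k => S *ᵥ xs k) Filter.atTop (nhds v) := by
    rw [tendsto_iff_norm_sub_tendsto_zero]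
    exact squeeze_zero (fun k => norm_nonneg _)
      (fun k => by rw [norm_sub_rev]; exact hxs2 k) h0
  exact hK.isClosed.mem_of_tendsto hT
    (Filter.Eventually.of_forall fun k => ⟨xs k, hxs1 k, rfl⟩)

theorem ellipsoid_monotone (n m : ℕ) (N : Matrix (Fin n) (Fin m) ℝ)
    (J J' : Finset (Fin m)) (hJJ : J' ⊆ J)
    (hJ' : (N * Matrix.diagonal (fun j => if j ∈ J' then (1 : ℝ) else 0) * Nᵀ).PosSemidef)
    (hJ : (N * Matrix.diagonal (fun j => if j ∈ J then (1 : ℝ) else 0) * Nᵀ).PosSemidef) :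
    hJ'.sqrt.mulVec '' {y : Fin n → ℝ | ∑ i, (y i) ^ 2 ≤ 1}
      ⊆ hJ.sqrt.mulVec '' {y : Fin n → ℝ | ∑ i, (y i) ^ 2 ≤ 1} := by
  refine sqrt_image_mono hJ' hJ fun w => ?_
  rw [quadform_eq N J' w, quadform_eq N J w]
  exact Finset.sum_le_sum_of_subset_of_nonneg hJJ fun j _ _ => sq_nonneg _
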